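/- Fix a polynomial h ∈ K̄[z], a center α ∈ K̄, b ∈ ℚ, and β ∈ K̄^× with v(β) = b. Then the left (resp. right) derivative at b of the piecewise linear function c ↦ v̲_h(c) (the Gauss valuation of h(β'x' + α) for v(β') = c) equals the highest (resp. lowest) degree appearing among the terms of a normalized reduction of h_{α,β}(x') = h(βx' + α). -/

import Mathlib

open Polynomial
open scoped Classical

/-- An additive ℚ-valued valuation on a field `K`, recorded as a bare function with
the valuation axioms imposed only at nonzero elements (the value at `0` is junk). -/
structure AddVal (K : Type*) [Field K] where
  v : K → ℚ
  map_one : v 1 = 0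
  map_mul : ∀ x y : K, x ≠ 0 → y ≠ 0 → v (x * y) = v x + v y
  add_ge : ∀ x y : K, x ≠ 0 → y ≠ 0 → x + y ≠ 0 → min (v x) (v y) ≤ v (x + y)

variable {K : Type*} [Field K]

/-- The Gauss valuation of a polynomial: the minimum of the valuations of its
(nonzero) coefficients, with junk value `0` at the zero polynomial. -/
noncomputable def AddVal.gauss (w : AddVal K) (h : K[X]) : ℚ :=
  if hh : h = 0 then 0
  else h.support.inf' (Polynomial.support_nonempty.mpr hh) fun i => w.v (h.coeff i)

/-- Gauss valuation valued in `ℚ ∪ {∞}`, taking the value `⊤` at the zero polynomial. -/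
noncomputable def AddVal.gaussT (w : AddVal K) (h : K[X]) : WithTop ℚ :=
  if h = 0 then ⊤ else (w.gauss h : WithTop ℚ)

/-- The quantity `t = v(ρ) - v(h) ∈ ℚ ∪ {∞}` attached to a
part-`p`-th-power decomposition `h = q^p + ρ` (it is `⊤` when `ρ = 0`). -/
noncomputable def AddVal.tdiff (w : AddVal K) (h ρ : K[X]) : WithTop ℚ :=
  if ρ = 0 then ⊤ else ((w.gauss ρ - w.gauss h : ℚ) : WithTop ℚ)

/-- `h = q ^ p + ρ` is a part-`p`-th-power decomposition (`deg q ≤ ⌊deg h / p⌋`). -/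
def IsPartDecomp (p : ℕ) (h q ρ : K[X]) : Prop :=
  h = q ^ p + ρ ∧ q.natDegree ≤ h.natDegree / p

/-- The threshold `p·v(p)/(p-1)`. -/
noncomputable def pBound (w : AddVal K) (p : ℕ) : ℚ :=
  (p : ℚ) * w.v (p : K) / ((p : ℚ) - 1)

/-- A part-`p`-th-power decomposition is good if `t ≥ p·v(p)/(p-1)` or if no
decomposition achieves a strictly larger value of `t = v(ρ) - v(h)`. -/
def IsGoodDecomp (w : AddVal K) (p : ℕ) (h q ρ : K[X]) : Prop :=
  IsPartDecomp p h q ρ ∧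
    (((pBound w p : ℚ) : WithTop ℚ) ≤ w.tdiff h ρ ∨
      ∀ q₁ ρ₁ : K[X], IsPartDecomp p h q₁ ρ₁ → w.tdiff h ρ₁ ≤ w.tdiff h ρ)

lemma AddVal.v_pow (w : AddVal K) {t : K} (ht : t ≠ 0) : ∀ n : ℕ, w.v (t ^ n) = n * w.v t
  | 0 => by simpa using w.map_one
  | n + 1 => by
    rw [pow_succ, w.map_mul _ _ (pow_ne_zero n ht) ht, AddVal.v_pow w ht n]
    push_cast; ring

lemma AddVal.v_div (w : AddVal K) {a b : K} (ha : a ≠ 0) (hb : b ≠ 0) :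
    w.v (a / b) = w.v a - w.v b := by
  have h : w.v (a / b * b) = w.v (a / b) + w.v b := w.map_mul _ _ (div_ne_zero ha hb) hb
  rw [div_mul_cancel₀ _ hb] at h
  linarith

lemma comp_C_mul_X_coeff' (p : K[X]) (t : K) (n : ℕ) :
    (p.comp (C t * X)).coeff n = t ^ n * p.coeff n := by
  rw [comp_eq_sum_left, Polynomial.sum, finset_sum_coeff]
  simp only [mul_pow, ← C_pow, ← mul_assoc, ← C_mul, coeff_C_mul, coeff_X_pow, mul_ite, mul_one,
    mul_zero]
  rw [Finset.sum_ite_eq p.support n (fun e => p.coeff e * t ^ e)]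
  by_cases hn : n ∈ p.support
  · rw [if_pos hn]; ring
  · rw [if_neg hn, Polynomial.notMem_support_iff.mp hn, mul_zero]

lemma key_inf (s : Finset ℕ) (hs : s.Nonempty) (f : ℕ → ℚ) (δ : ℚ) (m : ℕ) (hm : m ∈ s)
    (hfm : f m = s.inf' hs f)
    (hmono : ∀ j ∈ s, f j = s.inf' hs f → (m : ℚ) * δ ≤ (j : ℚ) * δ)
    (hgap : ∀ j ∈ s, f j ≠ s.inf' hs f → (m : ℚ) * δ - (j : ℚ) * δ ≤ f j - s.inf' hs f) :
    (s.inf' hs fun i => f i + (i : ℚ) * δ) = s.inf' hs f + (m : ℚ) * δ := by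
  apply le_antisymm
  · calc (s.inf' hs fun i => f i + (i : ℚ) * δ) ≤ f m + (m : ℚ) * δ := Finset.inf'_le _ hm
      _ = _ := by rw [hfm]
  · rw [Finset.le_inf'_iff]
    intro j hj
    by_cases hfj : f j = s.inf' hs f
    · have := hmono j hj hfj; linarith
    · have := hgap j hj hfj; linarith


/-- Lemma 4.13(b): the left (resp. right) derivative at `b = v(β)` of the
piecewise linear function `c ↦ v̲_h(c)` equals the highest (resp. lowest) degree
appearing in a normalized reduction of `h_{α,β}` — i.e. the greatest (resp. least) index
whose coefficient attains the Gauss valuation. This is expressed by local linearity with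
those slopes on a punctured left/right neighbourhood of `b`. -/
theorem statement9 {K : Type*} [Field K] (w : AddVal K) (h : K[X]) (hh : h ≠ 0)
    (α β : K) (hβ : β ≠ 0) :
    ∃ ε : ℚ, 0 < ε ∧ ∀ β' : K, β' ≠ 0 →
      ((w.v β - ε < w.v β' → w.v β' ≤ w.v β →
        w.gauss (h.comp (C β' * X + C α)) =
          w.gauss (h.comp (C β * X + C α)) +
            ((sSup {i : ℕ | (h.comp (C β * X + C α)).coeff i ≠ 0 ∧
                w.v ((h.comp (C β * X + C α)).coeff i)
                  = w.gauss (h.comp (C β * X + C α))} : ℕ) : ℚ) * (w.v β' - w.v β)) ∧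
       (w.v β ≤ w.v β' → w.v β' < w.v β + ε →
        w.gauss (h.comp (C β' * X + C α)) =
          w.gauss (h.comp (C β * X + C α)) +
            ((sInf {i : ℕ | (h.comp (C β * X + C α)).coeff i ≠ 0 ∧
                w.v ((h.comp (C β * X + C α)).coeff i)
                  = w.gauss (h.comp (C β * X + C α))} : ℕ) : ℚ) * (w.v β' - w.v β))) := by
  set g := h.comp (C β * X + C α) with hgdef
  have hg0 : g ≠ 0 := by
    rw [hgdef, Ne, comp_eq_zero_iff]
    push_neg
    refine ⟨hh, fun _ => ?_⟩
    intro hcon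
    have := congrArg natDegree hcon
    rw [natDegree_C] at this
    have h1 : (C β * X + C α).natDegree = 1 := by
      rw [natDegree_add_C, natDegree_C_mul hβ, natDegree_X]
    omega
  have hne : g.support.Nonempty := Polynomial.support_nonempty.mpr hg0
  set G := w.gauss g with hGset
  have hGdef : G = g.support.inf' hne fun i => w.v (g.coeff i) := by
    rw [hGset, AddVal.gauss, dif_neg hg0]
  set S : Set ℕ := {i : ℕ | g.coeff i ≠ 0 ∧ w.v (g.coeff i) = G} with hSdef
  have hSne : S.Nonempty := by
    obtain ⟨i, hi, hival⟩ := g.support.exists_mem_eq_inf' hne fun i => w.v (g.coeff i)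
    exact ⟨i, Polynomial.mem_support_iff.mp hi, by rw [hGdef, hival]⟩
  have hSbdd : BddAbove S := ⟨g.natDegree, fun i hi => le_natDegree_of_ne_zero hi.1⟩
  have hGle : ∀ j ∈ g.support, G ≤ w.v (g.coeff j) := by
    intro j hj; rw [hGdef]; exact Finset.inf'_le _ hj
  set T := g.support.filter fun j => w.v (g.coeff j) ≠ G with hTdef
  set γ : ℚ := if hT : T.Nonempty then T.inf' hT (fun j => w.v (g.coeff j) - G) else 1 with hγdef
  have hγpos : 0 < γ := by
    rw [hγdef]
    split_ifs with hT
    · rw [Finset.lt_inf'_iff]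
      intro j hj
      obtain ⟨hjs, hjne⟩ := Finset.mem_filter.mp hj
      have := hGle j hjs
      have : G < w.v (g.coeff j) := lt_of_le_of_ne this (Ne.symm hjne)
      linarith
    · norm_num
  have hγle : ∀ j ∈ g.support, w.v (g.coeff j) ≠ G → γ ≤ w.v (g.coeff j) - G := by
    intro j hj hjne
    have hjT : j ∈ T := Finset.mem_filter.mpr ⟨hj, hjne⟩
    rw [hγdef, dif_pos ⟨j, hjT⟩]
    exact Finset.inf'_le _ hjT
  set D := g.natDegree with hDdef
  set ε : ℚ := γ / ((D : ℚ) + 1) with hεdef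
  have hεpos : 0 < ε := by positivity
  -- main computation
  have main : ∀ β' : K, β' ≠ 0 → ∀ m : ℕ, m ∈ S →
      (∀ j ∈ S, (m : ℚ) * (w.v β' - w.v β) ≤ (j : ℚ) * (w.v β' - w.v β)) →
      |w.v β' - w.v β| ≤ ε →
      w.gauss (h.comp (C β' * X + C α)) = G + (m : ℚ) * (w.v β' - w.v β) := by
    intro β' hβ' m hmS hmono hδε
    set δ := w.v β' - w.v β with hδdef
    set t := β' / β with htdef
    have ht0 : t ≠ 0 := div_ne_zero hβ' hβ
    have hvt : w.v t = δ := w.v_div hβ' hβ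
    have hβt : β * t = β' := by rw [htdef]; field_simp
    have hcomp : h.comp (C β' * X + C α) = g.comp (C t * X) := by
      rw [hgdef, comp_assoc]
      congr 1
      rw [add_comp, mul_comp, C_comp, C_comp, X_comp, ← mul_assoc, ← C_mul, hβt]
    have hcoeff : ∀ n : ℕ, (h.comp (C β' * X + C α)).coeff n = t ^ n * g.coeff n := by
      intro n; rw [hcomp, comp_C_mul_X_coeff']
    have hsupp : (h.comp (C β' * X + C α)).support = g.support := by
      ext n
      rw [Polynomial.mem_support_iff, Polynomial.mem_support_iff, hcoeff n,
        mul_ne_zero_iff]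
      exact ⟨fun h => h.2, fun h => ⟨pow_ne_zero n ht0, h⟩⟩
    have hh' : h.comp (C β' * X + C α) ≠ 0 :=
      Polynomial.support_nonempty.mp (hsupp ▸ hne)
    rw [AddVal.gauss, dif_neg hh']
    have hfun : ∀ i ∈ (h.comp (C β' * X + C α)).support,
        w.v ((h.comp (C β' * X + C α)).coeff i) = w.v (g.coeff i) + (i : ℚ) * δ := by
      intro i hi
      have hi' : g.coeff i ≠ 0 := Polynomial.mem_support_iff.mp (hsupp ▸ hi)
      rw [hcoeff, w.map_mul _ _ (pow_ne_zero i ht0) hi', w.v_pow ht0, hvt]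
      ring
    rw [Finset.inf'_congr (Polynomial.support_nonempty.mpr hh') hsupp hfun]
    have hmD : m ≤ D := le_natDegree_of_ne_zero hmS.1
    rw [show ∀ H : g.support.Nonempty, (g.support.inf' H fun x => w.v (g.coeff x) + ↑x * δ) = g.support.inf' hne fun x => w.v (g.coeff x) + ↑x * δ from fun _ => rfl]
    rw [hGdef]
    refine key_inf g.support _ _ δ m (Polynomial.mem_support_iff.mpr hmS.1) ?_ ?_ ?_
    · rw [← hGdef]; exact hmS.2
    · intro j hj hfj
      exact hmono j ⟨Polynomial.mem_support_iff.mp hj, by rw [hGdef, hfj]⟩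
    · intro j hj hfj
      rw [← hGdef] at hfj ⊢
      have hjD : j ≤ D := le_natDegree_of_ne_zero (Polynomial.mem_support_iff.mp hj)
      have habs : |(m : ℚ) - (j : ℚ)| ≤ (D : ℚ) := by
        have hm' : (m : ℚ) ≤ (D : ℚ) := Nat.cast_le.mpr hmD
        have hj' : (j : ℚ) ≤ (D : ℚ) := Nat.cast_le.mpr hjD
        have hm0 : (0 : ℚ) ≤ (m : ℚ) := Nat.cast_nonneg m
        have hj0 : (0 : ℚ) ≤ (j : ℚ) := Nat.cast_nonneg j
        rw [abs_sub_le_iff]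
        constructor <;> linarith
      have hchain : (m : ℚ) * δ - (j : ℚ) * δ ≤ (D : ℚ) * ε := by
        calc (m : ℚ) * δ - (j : ℚ) * δ = ((m : ℚ) - j) * δ := by ring
          _ ≤ |((m : ℚ) - j) * δ| := le_abs_self _
          _ = |(m : ℚ) - j| * |δ| := abs_mul _ _
          _ ≤ (D : ℚ) * ε := by
              apply mul_le_mul habs hδε (abs_nonneg _) (by positivity)
      have hDε : (D : ℚ) * ε < γ := by
        rw [hεdef, mul_div_assoc', div_lt_iff₀ (by positivity)]
        nlinarith [hγpos]
      have := hγle j hj hfj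
      linarith
  refine ⟨ε, hεpos, fun β' hβ' => ⟨fun h1 h2 => ?_, fun h1 h2 => ?_⟩⟩
  · -- left: δ ∈ (-ε, 0], slope sSup S
    have hδ0 : w.v β' - w.v β ≤ 0 := by linarith
    have hm : sSup S ∈ S := Nat.sSup_mem hSne hSbdd
    refine main β' hβ' (sSup S) hm (fun j hj => ?_) ?_
    · have hjm : j ≤ sSup S := le_csSup hSbdd hj
      exact mul_le_mul_of_nonpos_right (Nat.cast_le.mpr hjm) hδ0
    · rw [abs_of_nonpos hδ0]; linarith
  · -- right: δ ∈ [0, ε), slope sInf S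
    have hδ0 : 0 ≤ w.v β' - w.v β := by linarith
    have hm : sInf S ∈ S := Nat.sInf_mem hSne
    refine main β' hβ' (sInf S) hm (fun j hj => ?_) ?_
    · have hjm : sInf S ≤ j := Nat.sInf_le hj
      exact mul_le_mul_of_nonneg_right (Nat.cast_le.mpr hjm) hδ0
    · rw [abs_of_nonneg hδ0]; linarith
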